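/- Let X₁ be an integer-valued random variable with characteristic function φ, and let 0 < β < 2. Suppose there exist constants K, x₀ > 0 such that E(X₁² · 1_{|X₁| ≤ x}) ≥ K·x^{2-β} for all x ≥ x₀. Then there exist a real number c > 0 and a positive integer d such that 1 - |φ(2πx)| ≥ c·‖dx‖^β for all x ∈ ℝ. -/

import Mathlib

open MeasureTheory Real
open scoped ENNReal

/-- Distance from a real number to the nearest integer. -/
noncomputable def nint (x : ℝ) : ℝ := |x - round x|

lemma nint_def (x : ℝ) : nint x = |x - round x| := rfl

lemma nint_nonneg (x : ℝ) : 0 ≤ nint x := abs_nonneg _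

lemma nint_le_half (x : ℝ) : nint x ≤ 1 / 2 := abs_sub_round x

lemma nint_le_abs_sub_int (x : ℝ) (k : ℤ) : nint x ≤ |x - k| := by
  rcases eq_or_ne k (round x) with rfl | h
  · exact le_of_eq rfl
  · have h1 : (1 : ℝ) ≤ |((round x : ℤ) : ℝ) - k| := by
      rw [← Int.cast_sub, ← Int.cast_abs]
      exact_mod_cast Int.one_le_abs (sub_ne_zero.2 (Ne.symm h))
    have h2 : |((round x : ℤ) : ℝ) - k| ≤ |((round x : ℤ) : ℝ) - x| + |x - k| :=
      abs_sub_le _ _ _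
    have h3 : |((round x : ℤ) : ℝ) - x| = nint x := by rw [abs_sub_comm]; rfl
    have h4 : nint x ≤ 1 / 2 := abs_sub_round x
    rw [h3] at h2
    linarith

lemma nint_int_add (k : ℤ) (x : ℝ) : nint ((k : ℝ) + x) = nint x := by
  unfold nint
  rw [add_comm (k : ℝ) x, round_add_intCast]
  congr 1
  push_cast
  ring

lemma cos_int_two_pi_add (k : ℤ) (x : ℝ) : Real.cos ((k : ℝ) * (2 * π) + x) = Real.cos x := by
  have hs : Real.sin ((k : ℝ) * (2 * π)) = 0 := by
    have : ((k : ℝ)) * (2 * π) = ((2 * k : ℤ) : ℝ) * π := by push_cast; ring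
    rw [this, Real.sin_int_mul_pi]
  rw [Real.cos_add, Real.cos_int_mul_two_pi, hs]
  ring

set_option maxHeartbeats 1000000 in
theorem stmt6 {Ω : Type*} [MeasurableSpace Ω] (μ : Measure Ω) [IsProbabilityMeasure μ]
    (X : Ω → ℝ) (hmeas : Measurable X)
    (hint : ∀ ω, ∃ k : ℤ, X ω = (k : ℝ))
    (φ : ℝ → ℂ)
    (hφ : ∀ t : ℝ, φ t = ∫ ω, Complex.exp (Complex.I * ((t * X ω : ℝ) : ℂ)) ∂μ)
    (β : ℝ) (hβ0 : 0 < β) (hβ2 : β < 2)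
    (K x₀ : ℝ) (hK : 0 < K) (hx₀ : 0 < x₀)
    (hmom : ∀ x : ℝ, x₀ ≤ x →
      K * x ^ (2 - β) ≤ ∫ ω, (if |X ω| ≤ x then (X ω) ^ 2 else 0) ∂μ) :
    ∃ c : ℝ, 0 < c ∧ ∃ d : ℕ, 0 < d ∧
      ∀ x : ℝ, c * nint ((d : ℝ) * x) ^ β ≤ 1 - ‖φ (2 * π * x)‖ := by
  classical
  have hπ : 0 < π := Real.pi_pos
  set ν : Measure (Ω × Ω) := μ.prod μ with hν
  set Y : Ω × Ω → ℝ := fun p => X p.1 - X p.2 with hYdef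
  have hYmeas : Measurable Y := (hmeas.comp measurable_fst).sub (hmeas.comp measurable_snd)
  have hYint : ∀ p, ∃ k : ℤ, Y p = (k : ℝ) := by
    intro p
    obtain ⟨k1, h1⟩ := hint p.1
    obtain ⟨k2, h2⟩ := hint p.2
    exact ⟨k1 - k2, by simp [hYdef, h1, h2]⟩
  -- integrability of bounded measurable functions
  have hbdd : ∀ {f : Ω × Ω → ℝ}, Measurable f → ∀ C : ℝ, (∀ p, |f p| ≤ C) →
      Integrable f ν := by
    intro f hf C hC
    exact (integrable_const C).mono' hf.aestronglyMeasurable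
      (Filter.Eventually.of_forall fun p => by simpa using hC p)
  have hbddμ : ∀ {f : Ω → ℝ}, Measurable f → ∀ C : ℝ, (∀ ω, |f ω| ≤ C) →
      Integrable f μ := by
    intro f hf C hC
    exact (integrable_const C).mono' hf.aestronglyMeasurable
      (Filter.Eventually.of_forall fun ω => by simpa using hC ω)
  set F : ℝ → ℝ := fun x => ∫ p, (1 - Real.cos (2 * π * x * Y p)) ∂ν with hFdef
  have hmeascos : ∀ x : ℝ, Measurable fun p => 1 - Real.cos (2 * π * x * Y p) :=
    fun x => measurable_const.sub (Real.measurable_cos.comp (hYmeas.const_mul _))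
  have hFig : ∀ x : ℝ, Integrable (fun p => 1 - Real.cos (2 * π * x * Y p)) ν := by
    intro x
    refine hbdd (hmeascos x) 2 fun p => ?_
    have h1 := Real.neg_one_le_cos (2 * π * x * Y p)
    have h2 := Real.cos_le_one (2 * π * x * Y p)
    rw [abs_le]; constructor <;> linarith
  have hFnonneg : ∀ x, 0 ≤ F x := by
    intro x
    refine integral_nonneg fun p => ?_
    simp only [Pi.zero_apply]
    linarith [Real.cos_le_one (2 * π * x * Y p)]
  -- |φ| ≤ 1
  have hφ1 : ∀ t : ℝ, ‖φ t‖ ≤ 1 := by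
    intro t
    rw [hφ]
    calc ‖∫ ω, Complex.exp (Complex.I * ((t * X ω : ℝ) : ℂ)) ∂μ‖
        ≤ ∫ ω, ‖Complex.exp (Complex.I * ((t * X ω : ℝ) : ℂ))‖ ∂μ := by
          simpa using
            norm_integral_le_integral_norm (fun ω => Complex.exp (Complex.I * ((t * X ω : ℝ) : ℂ))) (μ := μ)
      _ = ∫ (_ : Ω), (1 : ℝ) ∂μ := by
          refine integral_congr_ae (Filter.Eventually.of_forall fun ω => ?_)
          beta_reduce
          rw [mul_comm Complex.I]
          exact Complex.norm_exp_ofReal_mul_I _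
      _ = 1 := by simp
  -- key identity : F x = 1 - |φ (2πx)|²
  have hkey : ∀ x : ℝ, F x = 1 - (‖φ (2 * π * x)‖) ^ 2 := by
    intro x
    set t : ℝ := 2 * π * x with ht
    have hfmeas : Measurable fun ω => Complex.exp (Complex.I * ((t * X ω : ℝ) : ℂ)) :=
      Complex.measurable_exp.comp (measurable_const.mul
        (Complex.measurable_ofReal.comp (hmeas.const_mul t)))
    have hfC : Integrable (fun ω => Complex.exp (Complex.I * ((t * X ω : ℝ) : ℂ))) μ := by
      refine (integrable_const (1 : ℝ)).mono' hfmeas.aestronglyMeasurable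
        (Filter.Eventually.of_forall fun ω => ?_)
      rw [mul_comm Complex.I, Complex.norm_exp_ofReal_mul_I]
    have hYexp_meas : Measurable fun p : Ω × Ω => Complex.exp (Complex.I * ((t * Y p : ℝ) : ℂ)) :=
      Complex.measurable_exp.comp (measurable_const.mul
        (Complex.measurable_ofReal.comp (hYmeas.const_mul t)))
    have hYexp : Integrable (fun p => Complex.exp (Complex.I * ((t * Y p : ℝ) : ℂ))) ν := by
      refine (integrable_const (1 : ℝ)).mono' hYexp_meas.aestronglyMeasurable
        (Filter.Eventually.of_forall fun p => ?_)
      rw [mul_comm Complex.I, Complex.norm_exp_ofReal_mul_I]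
    have hprod : (∫ p, Complex.exp (Complex.I * ((t * Y p : ℝ) : ℂ)) ∂ν)
        = φ t * (starRingEnd ℂ) (φ t) := by
      have h1 : ∀ p : Ω × Ω, Complex.exp (Complex.I * ((t * Y p : ℝ) : ℂ))
          = Complex.exp (Complex.I * ((t * X p.1 : ℝ) : ℂ)) *
            Complex.exp (-(Complex.I * ((t * X p.2 : ℝ) : ℂ))) := by
        intro p
        rw [← Complex.exp_add]
        congr 1
        simp only [hYdef]
        push_cast
        ring
      calc (∫ p, Complex.exp (Complex.I * ((t * Y p : ℝ) : ℂ)) ∂ν)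
          = ∫ p : Ω × Ω, (fun ω => Complex.exp (Complex.I * ((t * X ω : ℝ) : ℂ))) p.1 *
              (fun ω => Complex.exp (-(Complex.I * ((t * X ω : ℝ) : ℂ)))) p.2 ∂ν := by
            exact integral_congr_ae (Filter.Eventually.of_forall fun p => h1 p)
        _ = (∫ ω, Complex.exp (Complex.I * ((t * X ω : ℝ) : ℂ)) ∂μ) *
              (∫ ω, Complex.exp (-(Complex.I * ((t * X ω : ℝ) : ℂ))) ∂μ) := by
            rw [hν]
            exact integral_prod_mul (fun ω => Complex.exp (Complex.I * ((t * X ω : ℝ) : ℂ)))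
              (fun ω => Complex.exp (-(Complex.I * ((t * X ω : ℝ) : ℂ))))
        _ = φ t * (starRingEnd ℂ) (φ t) := by
            have hconj : (∫ ω, Complex.exp (-(Complex.I * ((t * X ω : ℝ) : ℂ))) ∂μ)
                = (starRingEnd ℂ) (∫ ω, Complex.exp (Complex.I * ((t * X ω : ℝ) : ℂ)) ∂μ) := by
              rw [← integral_conj]
              refine integral_congr_ae (Filter.Eventually.of_forall fun ω => ?_)
              beta_reduce
              rw [← Complex.exp_conj]
              congr 1
              simp [Complex.conj_ofReal]
            rw [hconj, hφ]
    have hre : ∫ p, Real.cos (t * Y p) ∂ν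
        = RCLike.re (∫ p, Complex.exp (Complex.I * ((t * Y p : ℝ) : ℂ)) ∂ν) := by
      rw [← integral_re hYexp]
      refine integral_congr_ae (Filter.Eventually.of_forall fun p => ?_)
      beta_reduce
      rw [mul_comm Complex.I]
      simp only [RCLike.re_to_complex]
      exact (Complex.exp_ofReal_mul_I_re (t * Y p)).symm
    have habs : RCLike.re (φ t * (starRingEnd ℂ) (φ t)) = (‖φ t‖) ^ 2 := by
      rw [Complex.mul_conj, ← Complex.normSq_eq_norm_sq]
      simp [RCLike.re_to_complex]
    have hcos : ∫ p, Real.cos (t * Y p) ∂ν = (‖φ t‖) ^ 2 := by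
      rw [hre, hprod, habs]
    have hcosInt : Integrable (fun p => Real.cos (t * Y p)) ν := by
      refine hbdd (Real.measurable_cos.comp (hYmeas.const_mul t)) 1 fun p => ?_
      exact abs_cos_le_one _
    have hfin : (∫ p, (1 - Real.cos (t * Y p)) ∂ν) = 1 - (‖φ t‖) ^ 2 := by
      rw [integral_sub (integrable_const 1) hcosInt, hcos]
      simp
    simpa [hFdef, ht] using hfin
  -- half bound
  have hhalf : ∀ x : ℝ, F x / 2 ≤ 1 - ‖φ (2 * π * x)‖ := by
    intro x
    have h1 := hφ1 (2 * π * x)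
    have h2 := hkey x
    have h0 : 0 ≤ ‖φ (2 * π * x)‖ := norm_nonneg _
    nlinarith
  -- choice of M
  obtain ⟨M, hM0, hMhalf⟩ : ∃ M : ℝ, 0 < M ∧
      (1 : ℝ) / 2 ≤ ∫ ω, (if |X ω| ≤ M then (1 : ℝ) else 0) ∂μ := by
    set s : ℕ → Set Ω := fun n => {ω | (n : ℝ) < |X ω|} with hs
    have hsm : ∀ n, MeasurableSet (s n) := fun n =>
      measurableSet_lt measurable_const hmeas.abs
    have hanti : Antitone s := by
      intro n m hnm ω hω
      simp only [hs, Set.mem_setOf_eq] at hω ⊢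
      have : (n : ℝ) ≤ m := by exact_mod_cast hnm
      linarith
    have hiInter : ⋂ n, s n = ∅ := by
      ext ω
      simp only [Set.mem_iInter, Set.mem_empty_iff_false, iff_false, not_forall, hs,
        Set.mem_setOf_eq, not_lt]
      obtain ⟨n, hn⟩ := exists_nat_gt (|X ω|)
      exact ⟨n, hn.le⟩
    have htend : Filter.Tendsto (μ ∘ s) Filter.atTop (nhds 0) := by
      have := tendsto_measure_iInter_atTop (μ := μ) (fun n => (hsm n).nullMeasurableSet)
        hanti ⟨0, measure_ne_top μ _⟩
      rwa [hiInter, measure_empty] at this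
    have hev : ∀ᶠ n in Filter.atTop, μ (s n) < 1 / 2 := by
      exact htend.eventually_lt_const (by norm_num)
    obtain ⟨n, hn⟩ := hev.exists
    refine ⟨n + 1, by positivity, ?_⟩
    have hsub : ((s n)ᶜ : Set Ω) ⊆ {ω | |X ω| ≤ (n : ℝ) + 1} := by
      intro ω hω
      simp only [hs, Set.mem_compl_iff, Set.mem_setOf_eq, not_lt] at hω
      simp only [Set.mem_setOf_eq]
      linarith
    have hmeasset : MeasurableSet {ω | |X ω| ≤ (n : ℝ) + 1} :=
      measurableSet_le hmeas.abs measurable_const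
    have hcompl : (1 : ℝ≥0∞) / 2 ≤ μ ((s n)ᶜ) := by
      rw [measure_compl (hsm n) (measure_ne_top μ _), measure_univ]
      have h2 : μ (s n) ≤ 1 / 2 := hn.le
      calc (1 : ℝ≥0∞) / 2 = 1 - 1 / 2 := by
            rw [ENNReal.sub_half ENNReal.one_ne_top]
        _ ≤ 1 - μ (s n) := tsub_le_tsub_left h2 1
    have hμle : (1 : ℝ≥0∞) / 2 ≤ μ {ω | |X ω| ≤ (n : ℝ) + 1} :=
      le_trans hcompl (measure_mono hsub)
    have heq : (∫ ω, (if |X ω| ≤ (n : ℝ) + 1 then (1 : ℝ) else 0) ∂μ)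
        = (μ {ω | |X ω| ≤ (n : ℝ) + 1}).toReal := by
      rw [show (fun ω => if |X ω| ≤ (n : ℝ) + 1 then (1 : ℝ) else 0)
          = Set.indicator {ω | |X ω| ≤ (n : ℝ) + 1} (fun _ => (1 : ℝ)) from ?_]
      · rw [integral_indicator_const (1 : ℝ) hmeasset]; simp [measureReal_def]
      · funext ω; simp [Set.indicator_apply]
    rw [heq]
    have := ENNReal.toReal_mono (measure_ne_top μ _) hμle
    simpa using this
  -- truncated second moment function
  set S : ℝ → ℝ := fun u => ∫ ω, (if |X ω| ≤ u then (X ω) ^ 2 else 0) ∂μ with hSdef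
  -- choice of x₁
  set x₁ : ℝ := max x₀ (max 1 ((4 * M ^ 2 / K) ^ ((2 - β)⁻¹))) with hx₁def
  have hx₁0 : x₀ ≤ x₁ := le_max_left _ _
  have hx₁1 : (1 : ℝ) ≤ x₁ := le_trans (le_max_left _ _) (le_max_right _ _)
  have hx₁M : ∀ u : ℝ, x₁ ≤ u → 4 * M ^ 2 ≤ K * u ^ (2 - β) := by
    intro u hu
    have hb : (0 : ℝ) ≤ 4 * M ^ 2 / K := by positivity
    have h1 : ((4 * M ^ 2 / K) ^ ((2 - β)⁻¹)) ^ (2 - β) = 4 * M ^ 2 / K :=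
      Real.rpow_inv_rpow hb (by linarith)
    have h2 : ((4 * M ^ 2 / K) ^ ((2 - β)⁻¹)) ≤ u :=
      le_trans (le_trans (le_max_right _ _) (le_max_right _ _)) hu
    have h3 : ((4 * M ^ 2 / K) ^ ((2 - β)⁻¹)) ^ (2 - β) ≤ u ^ (2 - β) :=
      Real.rpow_le_rpow (Real.rpow_nonneg hb _) h2 (by linarith)
    rw [h1] at h3
    calc 4 * M ^ 2 = K * (4 * M ^ 2 / K) := by field_simp
      _ ≤ K * u ^ (2 - β) := by
          exact mul_le_mul_of_nonneg_left h3 hK.le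
  -- choice of ε₀
  set ε₀ : ℝ := 1 / (2 * (x₁ + 2 * M)) with hε₀def
  have hx₁Mpos : 0 < x₁ + 2 * M := by linarith
  have hε₀pos : 0 < ε₀ := by positivity
  have hε₀half : ε₀ ≤ 1 / 2 := by
    rw [hε₀def]
    rw [div_le_div_iff₀ (by positivity) (by norm_num)]
    linarith
  -- the small-ε estimate
  have hsmall : ∀ ε : ℝ, |ε| ≤ ε₀ → K * (4 : ℝ) ^ (β - 2) * |ε| ^ β ≤ F ε := by
    intro ε hε
    rcases eq_or_ne ε 0 with rfl | hεne
    · rw [abs_zero, Real.zero_rpow hβ0.ne', mul_zero]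
      exact hFnonneg 0
    have hεa : 0 < |ε| := abs_pos.2 hεne
    set T : ℝ := 1 / (2 * |ε|) with hTdef
    have hTpos : 0 < T := by positivity
    have hTbig : x₁ + 2 * M ≤ T := by
      rw [hTdef]
      rw [le_div_iff₀ (by positivity)]
      have : 2 * |ε| ≤ 2 * ε₀ := by linarith
      calc (x₁ + 2 * M) * (2 * |ε|) ≤ (x₁ + 2 * M) * (2 * ε₀) := by
            exact mul_le_mul_of_nonneg_left this hx₁Mpos.le
        _ = 1 := by rw [hε₀def]; field_simp
    -- pointwise bound
    have hpt : ∀ p, 8 * ε ^ 2 * (if |Y p| ≤ T then (Y p) ^ 2 else 0)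
        ≤ 1 - Real.cos (2 * π * ε * Y p) := by
      intro p
      by_cases h : |Y p| ≤ T
      · rw [if_pos h]
        have hθ : |2 * π * ε * Y p| ≤ π := by
          have e1 : |2 * π * ε * Y p| = 2 * π * |ε| * |Y p| := by
            rw [abs_mul, abs_mul, abs_mul]
            rw [abs_of_pos (by norm_num : (0:ℝ) < 2), abs_of_pos hπ]
          rw [e1]
          calc 2 * π * |ε| * |Y p| ≤ 2 * π * |ε| * T := by
                exact mul_le_mul_of_nonneg_left h (by positivity)
            _ = π := by rw [hTdef]; field_simp
        have hcb := Real.cos_le_one_sub_mul_cos_sq hθ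
        have hcomp : 2 / π ^ 2 * (2 * π * ε * Y p) ^ 2 = 8 * ε ^ 2 * (Y p) ^ 2 := by
          field_simp
          ring
        rw [← hcomp]
        linarith
      · rw [if_neg h, mul_zero]
        linarith [Real.cos_le_one (2 * π * ε * Y p)]
    have hItruncMeas : Measurable fun p => if |Y p| ≤ T then (Y p) ^ 2 else 0 :=
      Measurable.ite (measurableSet_le hYmeas.abs measurable_const) (hYmeas.pow_const 2)
        measurable_const
    have hItrunc : Integrable (fun p => if |Y p| ≤ T then (Y p) ^ 2 else 0) ν := by
      refine hbdd hItruncMeas (T ^ 2) fun p => ?_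
      by_cases h : |Y p| ≤ T
      · rw [if_pos h, abs_of_nonneg (sq_nonneg _)]
        calc (Y p) ^ 2 = |Y p| ^ 2 := (sq_abs _).symm
          _ ≤ T ^ 2 := by nlinarith [abs_nonneg (Y p)]
      · rw [if_neg h, abs_zero]; positivity
    have hstep1 : 8 * ε ^ 2 * ∫ p, (if |Y p| ≤ T then (Y p) ^ 2 else 0) ∂ν ≤ F ε := by
      rw [← integral_const_mul]
      exact integral_mono (hItrunc.const_mul _) (hFig ε) hpt
    -- lower bound on the truncated symmetrized moment
    set u : ℝ := T - M with hudef
    have hux₁ : x₁ ≤ u := by rw [hudef]; linarith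
    have hux₀ : x₀ ≤ u := le_trans hx₁0 hux₁
    have hu1 : (1 : ℝ) ≤ u := le_trans hx₁1 hux₁
    have hupos : 0 < u := by linarith
    have hptH : ∀ p : Ω × Ω,
        (fun ω => if |X ω| ≤ u then (X ω) ^ 2 / 2 - M ^ 2 else 0) p.1 *
        (fun ω => if |X ω| ≤ M then (1 : ℝ) else 0) p.2
        ≤ (if |Y p| ≤ T then (Y p) ^ 2 else 0) := by
      intro p
      simp only
      by_cases h1 : |X p.1| ≤ u
      · by_cases h2 : |X p.2| ≤ M
        · rw [if_pos h1, if_pos h2, mul_one]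
          have hYle : |Y p| ≤ T := by
            calc |Y p| = |X p.1 + -(X p.2)| := by rw [hYdef]; ring_nf
              _ ≤ |X p.1| + |-(X p.2)| := abs_add_le _ _
              _ = |X p.1| + |X p.2| := by rw [abs_neg]
              _ ≤ u + M := add_le_add h1 h2
              _ = T := by rw [hudef]; ring
          rw [if_pos hYle]
          have h3 : (X p.2) ^ 2 ≤ M ^ 2 := by
            calc (X p.2) ^ 2 = |X p.2| ^ 2 := (sq_abs _).symm
              _ ≤ M ^ 2 := by nlinarith [abs_nonneg (X p.2)]
          have hYexpand : (Y p) ^ 2 = (X p.1 - X p.2) ^ 2 := by rw [hYdef]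
          rw [hYexpand]
          nlinarith [sq_nonneg (X p.1 - 2 * X p.2)]
        · rw [if_neg h2, mul_zero]
          split <;> positivity
      · rw [if_neg h1, zero_mul]
        split <;> positivity
    have hHmeas : Measurable fun p : Ω × Ω =>
        (if |X p.1| ≤ u then (X p.1) ^ 2 / 2 - M ^ 2 else 0) *
        (if |X p.2| ≤ M then (1 : ℝ) else 0) := by
      apply Measurable.mul
      · exact (Measurable.ite (measurableSet_le hmeas.abs measurable_const)
          (((hmeas.pow_const 2).div_const 2).sub measurable_const) measurable_const).comp
          measurable_fst
      · exact (Measurable.ite (measurableSet_le hmeas.abs measurable_const) measurable_const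
          measurable_const).comp measurable_snd
    have hH : Integrable (fun p : Ω × Ω =>
        (if |X p.1| ≤ u then (X p.1) ^ 2 / 2 - M ^ 2 else 0) *
        (if |X p.2| ≤ M then (1 : ℝ) else 0)) ν := by
      refine hbdd hHmeas ((u ^ 2 / 2 + M ^ 2) * 1) fun p => ?_
      rw [abs_mul]
      apply mul_le_mul
      · by_cases h1 : |X p.1| ≤ u
        · rw [if_pos h1]
          have : (X p.1) ^ 2 ≤ u ^ 2 := by
            calc (X p.1) ^ 2 = |X p.1| ^ 2 := (sq_abs _).symm
              _ ≤ u ^ 2 := by nlinarith [abs_nonneg (X p.1)]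
          rw [abs_le]
          constructor <;> nlinarith [sq_nonneg (X p.1)]
        · rw [if_neg h1, abs_zero]; positivity
      · split <;> simp
      · exact abs_nonneg _
      · positivity
    have hHeq : (∫ p : Ω × Ω, (fun ω => if |X ω| ≤ u then (X ω) ^ 2 / 2 - M ^ 2 else 0) p.1 *
        (fun ω => if |X ω| ≤ M then (1 : ℝ) else 0) p.2 ∂ν)
        = (∫ ω, (if |X ω| ≤ u then (X ω) ^ 2 / 2 - M ^ 2 else 0) ∂μ) *
          (∫ ω, (if |X ω| ≤ M then (1 : ℝ) else 0) ∂μ) := by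
      rw [hν]
      exact integral_prod_mul (fun ω => if |X ω| ≤ u then (X ω) ^ 2 / 2 - M ^ 2 else 0)
        (fun ω => if |X ω| ≤ M then (1 : ℝ) else 0)
    -- first factor
    have hf1 : K * u ^ (2 - β) / 4 ≤ ∫ ω, (if |X ω| ≤ u then (X ω) ^ 2 / 2 - M ^ 2 else 0) ∂μ := by
      have hlow : ∀ ω, (if |X ω| ≤ u then (X ω) ^ 2 else 0) / 2 - M ^ 2
          ≤ (if |X ω| ≤ u then (X ω) ^ 2 / 2 - M ^ 2 else 0) := by
        intro ω
        by_cases h : |X ω| ≤ u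
        · rw [if_pos h, if_pos h]
        · rw [if_neg h, if_neg h]
          nlinarith
      have hiS : Integrable (fun ω => if |X ω| ≤ u then (X ω) ^ 2 else 0) μ := by
        refine hbddμ (Measurable.ite (measurableSet_le hmeas.abs measurable_const)
          (hmeas.pow_const 2) measurable_const) (u ^ 2) fun ω => ?_
        by_cases h : |X ω| ≤ u
        · rw [if_pos h, abs_of_nonneg (sq_nonneg _)]
          calc (X ω) ^ 2 = |X ω| ^ 2 := (sq_abs _).symm
            _ ≤ u ^ 2 := by nlinarith [abs_nonneg (X ω)]
        · rw [if_neg h, abs_zero]; positivity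
      have hi1 : Integrable (fun ω => (if |X ω| ≤ u then (X ω) ^ 2 else 0) / 2 - M ^ 2) μ :=
        (hiS.div_const 2).sub (integrable_const _)
      have hi2 : Integrable (fun ω => if |X ω| ≤ u then (X ω) ^ 2 / 2 - M ^ 2 else 0) μ := by
        refine hbddμ (Measurable.ite (measurableSet_le hmeas.abs measurable_const)
          (((hmeas.pow_const 2).div_const 2).sub measurable_const) measurable_const)
          (u ^ 2 / 2 + M ^ 2) fun ω => ?_
        by_cases h : |X ω| ≤ u
        · rw [if_pos h]
          have : (X ω) ^ 2 ≤ u ^ 2 := by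
            calc (X ω) ^ 2 = |X ω| ^ 2 := (sq_abs _).symm
              _ ≤ u ^ 2 := by nlinarith [abs_nonneg (X ω)]
          rw [abs_le]
          constructor <;> nlinarith [sq_nonneg (X ω)]
        · rw [if_neg h, abs_zero]; positivity
      have hmono := integral_mono hi1 hi2 hlow
      rw [integral_sub (hiS.div_const 2) (integrable_const _)] at hmono
      rw [integral_div, integral_const] at hmono
      simp only [probReal_univ, one_smul] at hmono
      have hSu := hmom u hux₀
      have h4M := hx₁M u hux₁
      have : K * u ^ (2 - β) ≤ S u := hSu
      simp only [hSdef] at this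
      linarith
    have hKu : 0 < K * u ^ (2 - β) / 4 := by
      have := Real.rpow_pos_of_pos hupos (2 - β)
      positivity
    have htrunc : K * u ^ (2 - β) / 4 * (1 / 2)
        ≤ ∫ p, (if |Y p| ≤ T then (Y p) ^ 2 else 0) ∂ν := by
      calc K * u ^ (2 - β) / 4 * (1 / 2)
          ≤ (∫ ω, (if |X ω| ≤ u then (X ω) ^ 2 / 2 - M ^ 2 else 0) ∂μ) *
            (∫ ω, (if |X ω| ≤ M then (1 : ℝ) else 0) ∂μ) := by
            apply mul_le_mul hf1 hMhalf (by norm_num) (le_trans hKu.le hf1)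
        _ = ∫ p : Ω × Ω, (fun ω => if |X ω| ≤ u then (X ω) ^ 2 / 2 - M ^ 2 else 0) p.1 *
            (fun ω => if |X ω| ≤ M then (1 : ℝ) else 0) p.2 ∂ν := hHeq.symm
        _ ≤ ∫ p, (if |Y p| ≤ T then (Y p) ^ 2 else 0) ∂ν := integral_mono hH hItrunc hptH
    have hcomb : 8 * ε ^ 2 * (K * u ^ (2 - β) / 4 * (1 / 2)) ≤ F ε :=
      le_trans (mul_le_mul_of_nonneg_left htrunc (by positivity)) hstep1
    -- now convert to the |ε|^β form
    have huT : T / 2 ≤ u := by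
      rw [hudef]
      have : 2 * M ≤ T := by linarith
      linarith
    have hmono2 : (T / 2) ^ (2 - β) ≤ u ^ (2 - β) :=
      Real.rpow_le_rpow (by positivity) huT (by linarith)
    have hT2 : T / 2 = (4 * |ε|)⁻¹ := by rw [hTdef]; field_simp; ring
    have hval : ((4 * |ε|)⁻¹ : ℝ) ^ (2 - β) = (4 : ℝ) ^ (β - 2) * |ε| ^ (β - 2) := by
      rw [Real.inv_rpow (by positivity), ← Real.rpow_neg (by positivity), neg_sub,
        Real.mul_rpow (by norm_num) (abs_nonneg ε)]
    have hpow : ε ^ 2 * |ε| ^ (β - 2) = |ε| ^ β := by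
      have h1 : ε ^ 2 = |ε| ^ ((2 : ℕ) : ℝ) := by rw [Real.rpow_natCast]; exact (sq_abs ε).symm
      rw [h1, ← Real.rpow_add hεa]
      norm_num
    have hchain : K * (4 : ℝ) ^ (β - 2) * |ε| ^ β
        = 8 * ε ^ 2 * (K * (T / 2) ^ (2 - β) / 4 * (1 / 2)) := by
      rw [hT2, hval, ← hpow]; ring
    have hstep2 : 8 * ε ^ 2 * (K * (T / 2) ^ (2 - β) / 4 * (1 / 2))
        ≤ 8 * ε ^ 2 * (K * u ^ (2 - β) / 4 * (1 / 2)) := by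
      apply mul_le_mul_of_nonneg_left _ (by positivity)
      have := mul_le_mul_of_nonneg_left hmono2 hK.le
      linarith
    linarith [hcomb]
  -- characterization of zeros of F
  have hzero_iff : ∀ x : ℝ, F x = 0 ↔ (∀ᵐ p ∂ν, ∃ k : ℤ, x * Y p = (k : ℝ)) := by
    intro x
    constructor
    · intro hx
      have hnn : (0 : Ω × Ω → ℝ) ≤ fun p => 1 - Real.cos (2 * π * x * Y p) := by
        intro p
        simp only [Pi.zero_apply]
        linarith [Real.cos_le_one (2 * π * x * Y p)]
      have h0 := (integral_eq_zero_iff_of_nonneg hnn (hFig x)).mp hx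
      filter_upwards [h0] with p hp
      have hp' : (1 : ℝ) - Real.cos (2 * π * x * Y p) = 0 := hp
      have hcos1 : Real.cos (2 * π * x * Y p) = 1 := by linarith
      obtain ⟨n, hn⟩ := (Real.cos_eq_one_iff _).mp hcos1
      refine ⟨n, ?_⟩
      have h2π : (2 : ℝ) * π ≠ 0 := by positivity
      have : (n : ℝ) * (2 * π) = (x * Y p) * (2 * π) := by rw [hn]; ring
      exact (mul_right_cancel₀ h2π this).symm
    · intro hx
      apply integral_eq_zero_of_ae
      filter_upwards [hx] with p hp
      obtain ⟨k, hk⟩ := hp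
      have : 2 * π * x * Y p = (k : ℝ) * (2 * π) := by rw [← hk]; ring
      simp only [this, Real.cos_int_mul_two_pi, Pi.zero_apply, sub_self]
  have hzero_shift : ∀ x δ : ℝ, F x = 0 → F (x + δ) = F δ := by
    intro x δ hx
    have h0 := (hzero_iff x).mp hx
    apply integral_congr_ae
    filter_upwards [h0] with p hp
    obtain ⟨k, hk⟩ := hp
    have he : 2 * π * (x + δ) * Y p = (k : ℝ) * (2 * π) + 2 * π * δ * Y p := by
      rw [← hk]; ring
    rw [he, cos_int_two_pi_add]
  have hzero_mul : ∀ (j : ℤ) (b : ℝ), F b = 0 → F ((j : ℝ) * b) = 0 := by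
    intro j b hb
    rw [hzero_iff] at hb ⊢
    filter_upwards [hb] with p hp
    obtain ⟨k, hk⟩ := hp
    exact ⟨j * k, by push_cast; rw [show (j : ℝ) * b * Y p = (j : ℝ) * (b * Y p) by ring, hk]⟩
  have hzero_int : ∀ k : ℤ, F (k : ℝ) = 0 := by
    intro k
    rw [hzero_iff]
    apply Filter.Eventually.of_forall
    intro p
    obtain ⟨m, hm⟩ := hYint p
    exact ⟨k * m, by rw [hm]; push_cast; ring⟩
  have hno_small : ∀ z : ℝ, 0 < z → F z = 0 → ε₀ ≤ z := by
    intro z hz hFz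
    by_contra hcon
    push_neg at hcon
    have h1 := hsmall z (by rw [abs_of_pos hz]; linarith)
    rw [hFz, abs_of_pos hz] at h1
    have h2 : 0 < K * (4 : ℝ) ^ (β - 2) * z ^ β := by
      have := Real.rpow_pos_of_pos hz β
      have := Real.rpow_pos_of_pos (by norm_num : (0:ℝ) < 4) (β - 2)
      positivity
    linarith
  -- continuity of F
  have hFcont : Continuous F := by
    apply continuous_of_dominated (bound := fun _ => (2 : ℝ))
    · exact fun x => (hmeascos x).aestronglyMeasurable
    · intro x
      apply Filter.Eventually.of_forall
      intro p
      rw [Real.norm_eq_abs, abs_le]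
      constructor <;>
        [linarith [Real.cos_le_one (2 * π * x * Y p)];
         linarith [Real.neg_one_le_cos (2 * π * x * Y p)]]
    · exact integrable_const 2
    · apply Filter.Eventually.of_forall
      intro p
      have : Continuous fun x : ℝ => 2 * π * x * Y p :=
        (continuous_const.mul continuous_id).mul continuous_const
      exact continuous_const.sub (Real.continuous_cos.comp this)
  -- the minimal positive zero
  set P : Set ℝ := {z ∈ Set.Icc ε₀ 1 | F z = 0} with hPdef
  have hF1 : F 1 = 0 := by simpa using hzero_int 1
  have h1P : (1 : ℝ) ∈ P := ⟨⟨by linarith, le_refl 1⟩, hF1⟩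
  have hPeq : P = Set.Icc ε₀ 1 ∩ F ⁻¹' {0} := by
    ext z; simp [hPdef, Set.mem_sep_iff, Set.mem_preimage, and_comm]
  have hPcomp : IsCompact P := by
    rw [hPeq]
    exact isCompact_Icc.inter_right (isClosed_singleton.preimage hFcont)
  obtain ⟨aa, haP, haMin⟩ := hPcomp.exists_isMinOn ⟨1, h1P⟩ continuousOn_id
  have haapos : 0 < aa := lt_of_lt_of_le hε₀pos haP.1.1
  have haF : F aa = 0 := haP.2
  have hmultiple : ∀ z : ℝ, 0 < z → F z = 0 → z = (⌊z / aa⌋ : ℝ) * aa := by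
    intro z hz hFz
    set r : ℝ := z - ⌊z / aa⌋ * aa with hrdef
    have hr0 : 0 ≤ r := Int.sub_floor_div_mul_nonneg z haapos
    have hra : r < aa := Int.sub_floor_div_mul_lt z haapos
    have hFr : F r = 0 := by
      have h1 : F ((⌊z / aa⌋ : ℝ) * aa) = 0 := hzero_mul _ _ haF
      have h2 := hzero_shift ((⌊z / aa⌋ : ℝ) * aa) r h1
      rw [show (⌊z / aa⌋ : ℝ) * aa + r = z by rw [hrdef]; ring] at h2
      rw [← h2]; exact hFz
    rcases eq_or_lt_of_le hr0 with h | h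
    · have : r = 0 := h.symm
      rw [hrdef] at this
      linarith
    · exfalso
      have h5 : ε₀ ≤ r := hno_small r h hFr
      have h6 : r ∈ P := ⟨⟨h5, le_trans hra.le haP.1.2⟩, hFr⟩
      have h7 : aa ≤ r := haMin h6
      linarith
  have h1mult : (1 : ℝ) = (⌊1 / aa⌋ : ℝ) * aa := hmultiple 1 one_pos hF1
  set dZ : ℤ := ⌊1 / aa⌋ with hdZdef
  have hdZpos : 0 < dZ := by
    by_contra hcon
    push_neg at hcon
    have : (dZ : ℝ) ≤ 0 := by exact_mod_cast hcon
    nlinarith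
  set d : ℕ := dZ.toNat with hddef
  have hdcast : ((d : ℕ) : ℝ) = (dZ : ℝ) := by
    rw [hddef]; exact_mod_cast Int.toNat_of_nonneg hdZpos.le
  have hda : (d : ℝ) * aa = 1 := by rw [hdcast]; linarith [h1mult]
  have hdpos : (0 : ℝ) < d := by rw [hdcast]; exact_mod_cast hdZpos
  -- the compact "medium" set
  set C : Set ℝ := Set.Icc (0 : ℝ) 1 ∩ ⋂ (j : ℕ) (_ : j ≤ d), {z : ℝ | ε₀ ≤ |z - j * aa|}
    with hCdef
  have hCcomp : IsCompact C := by
    apply isCompact_Icc.inter_right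
    exact isClosed_iInter fun j => isClosed_iInter fun _ =>
      isClosed_le continuous_const ((continuous_id.sub continuous_const).abs)
  obtain ⟨m, hmpos, hmmin⟩ : ∃ m : ℝ, 0 < m ∧ ∀ z ∈ C, m ≤ F z := by
    by_cases hC : C.Nonempty
    · obtain ⟨z₀, hz₀C, hz₀min⟩ := hCcomp.exists_isMinOn hC hFcont.continuousOn
      refine ⟨F z₀, ?_, fun z hz => hz₀min hz⟩
      rcases (hFnonneg z₀).lt_or_eq with h | h
      · exact h
      exfalso
      have hz₀mem := hz₀C.1
      have hz₀cons : ∀ j : ℕ, j ≤ d → ε₀ ≤ |z₀ - j * aa| := by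
        intro j hj
        have := hz₀C.2
        rw [Set.mem_iInter] at this
        have := this j
        rw [Set.mem_iInter] at this
        exact this hj
      rcases eq_or_lt_of_le hz₀mem.1 with h0 | h0
      · have := hz₀cons 0 (Nat.zero_le d)
        rw [← h0] at this
        simp at this
        linarith
      · have hFz₀ : F z₀ = 0 := h.symm
        have hmul := hmultiple z₀ h0 hFz₀
        set l : ℤ := ⌊z₀ / aa⌋ with hldef
        have hl1 : 1 ≤ l := by
          by_contra hcon
          push_neg at hcon
          have : (l : ℝ) ≤ 0 := by exact_mod_cast (by omega : l ≤ 0)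
          nlinarith
        have hld : l ≤ dZ := by
          have h1 : (l : ℝ) * aa ≤ (dZ : ℝ) * aa := by
            rw [← hmul, ← hdcast, hda]
            exact hz₀mem.2
          have : (l : ℝ) ≤ (dZ : ℝ) := le_of_mul_le_mul_right h1 haapos
          exact_mod_cast this
        have hlnat : l.toNat ≤ d := by omega
        have := hz₀cons l.toNat hlnat
        have hcast : ((l.toNat : ℕ) : ℝ) = (l : ℝ) := by
          exact_mod_cast Int.toNat_of_nonneg (by omega : (0:ℤ) ≤ l)
        rw [hcast, ← hmul] at this
        simp at this
        linarith
    · exact ⟨1, one_pos, fun z hz => absurd ⟨z, hz⟩ hC⟩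
  -- the constant
  have h4pow : 0 < (4 : ℝ) ^ (β - 2) := Real.rpow_pos_of_pos (by norm_num) _
  have hdβ : 0 < (d : ℝ) ^ β := Real.rpow_pos_of_pos hdpos _
  refine ⟨1 / 2 * min (K * (4 : ℝ) ^ (β - 2) / (d : ℝ) ^ β) m, by positivity, d,
    by omega, ?_⟩
  intro x
  set j : ℤ := round ((d : ℝ) * x) with hjdef
  set δ : ℝ := x - j * aa with hδdef
  have hδd : (d : ℝ) * δ = (d : ℝ) * x - j := by
    rw [hδdef]
    have : (d : ℝ) * ((j : ℝ) * aa) = (j : ℝ) * ((d : ℝ) * aa) := by ring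
    rw [mul_sub, this, hda, mul_one]
  have hnintx : nint ((d : ℝ) * x) = (d : ℝ) * |δ| := by
    rw [show (d : ℝ) * |δ| = |(d : ℝ) * δ| by rw [abs_mul, abs_of_pos hdpos], hδd,
      nint_def, hjdef]
  have hhalfx := hhalf x
  have hnβ : (0 : ℝ) ≤ nint ((d : ℝ) * x) ^ β := Real.rpow_nonneg (nint_nonneg _) _
  suffices hsuff : min (K * (4 : ℝ) ^ (β - 2) / (d : ℝ) ^ β) m * nint ((d : ℝ) * x) ^ β ≤ F x by
    calc 1 / 2 * min (K * (4 : ℝ) ^ (β - 2) / (d : ℝ) ^ β) m * nint ((d : ℝ) * x) ^ β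
        = (min (K * (4 : ℝ) ^ (β - 2) / (d : ℝ) ^ β) m * nint ((d : ℝ) * x) ^ β) / 2 := by ring
      _ ≤ F x / 2 := by linarith
      _ ≤ 1 - ‖φ (2 * π * x)‖ := hhalfx
  by_cases hcase : |δ| ≤ ε₀
  · -- small case
    have hFx : F x = F δ := by
      have hz : F ((j : ℝ) * aa) = 0 := hzero_mul j aa haF
      have h2 := hzero_shift ((j : ℝ) * aa) δ hz
      rw [show (j : ℝ) * aa + δ = x by rw [hδdef]; ring] at h2
      exact h2
    have hs := hsmall δ hcase
    have hnpow : nint ((d : ℝ) * x) ^ β = (d : ℝ) ^ β * |δ| ^ β := by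
      rw [hnintx, Real.mul_rpow hdpos.le (abs_nonneg _)]
    rw [hnpow, hFx]
    calc min (K * (4 : ℝ) ^ (β - 2) / (d : ℝ) ^ β) m * ((d : ℝ) ^ β * |δ| ^ β)
        ≤ (K * (4 : ℝ) ^ (β - 2) / (d : ℝ) ^ β) * ((d : ℝ) ^ β * |δ| ^ β) := by
          apply mul_le_mul_of_nonneg_right (min_le_left _ _)
          positivity
      _ = K * (4 : ℝ) ^ (β - 2) * |δ| ^ β := by field_simp
      _ ≤ F δ := hs
  · -- medium case
    push_neg at hcase
    set z₁ : ℝ := x - ⌊x⌋ with hz₁def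
    have hFx : F x = F z₁ := by
      have h2 := hzero_shift ((⌊x⌋ : ℝ)) z₁ (hzero_int ⌊x⌋)
      rw [show (⌊x⌋ : ℝ) + z₁ = x by rw [hz₁def]; ring] at h2
      exact h2
    have hz₁C : z₁ ∈ C := by
      constructor
      · exact ⟨by linarith [Int.floor_le x], by linarith [Int.lt_floor_add_one x]⟩
      · rw [Set.mem_iInter]
        intro j'
        rw [Set.mem_iInter]
        intro hj'
        show ε₀ ≤ |z₁ - (j' : ℝ) * aa|
        have e1 : (d : ℝ) * (z₁ - (j' : ℝ) * aa) = (d : ℝ) * z₁ - (j' : ℝ) := by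
          have : (d : ℝ) * ((j' : ℝ) * aa) = (j' : ℝ) * ((d : ℝ) * aa) := by ring
          rw [mul_sub, this, hda, mul_one]
        have e2 : nint ((d : ℝ) * z₁) ≤ |(d : ℝ) * z₁ - ((j' : ℤ) : ℝ)| := by
          exact nint_le_abs_sub_int _ _
        have e3 : nint ((d : ℝ) * z₁) = nint ((d : ℝ) * x) := by
          have heq : (d : ℝ) * z₁ = ((-(d * ⌊x⌋) : ℤ) : ℝ) + (d : ℝ) * x := by
            rw [hz₁def]; push_cast; ring
          rw [heq, nint_int_add]
        have e4 : (d : ℝ) * ε₀ < (d : ℝ) * |δ| := by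
          exact mul_lt_mul_of_pos_left hcase hdpos
        have e5 : (d : ℝ) * |δ| ≤ |(d : ℝ) * z₁ - (j' : ℝ)| := by
          rw [← hnintx, ← e3]
          exact_mod_cast e2
        have e6 : ε₀ < |z₁ - (j' : ℝ) * aa| := by
          have h7 : (d : ℝ) * ε₀ < |(d : ℝ) * (z₁ - (j' : ℝ) * aa)| := by
            rw [e1]; linarith
          rw [abs_mul, abs_of_pos hdpos] at h7
          exact lt_of_mul_lt_mul_left h7 hdpos.le
        exact e6.le
    have hm := hmmin z₁ hz₁C
    have hnint1 : nint ((d : ℝ) * x) ^ β ≤ 1 := by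
      apply Real.rpow_le_one (nint_nonneg _) _ hβ0.le
      linarith [nint_le_half ((d : ℝ) * x)]
    rw [hFx]
    calc min (K * (4 : ℝ) ^ (β - 2) / (d : ℝ) ^ β) m * nint ((d : ℝ) * x) ^ β
        ≤ m * 1 := by
          apply mul_le_mul (min_le_right _ _) hnint1 hnβ hmpos.le
      _ = m := mul_one m
      _ ≤ F z₁ := hm
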